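/- Let λ, ε₁, ε₂ ∈ F_3 \ {0}, ν ∈ F_3, δ = λ + ε₂ with δ ≠ 0. Define ε* = 1 if ν = 0 and ε* = -1 if ν ≠ 0. Set U = λT³ - ε₂T + ν and V = ε₁(T² + 1). Then U/V equals the finite continued fraction [ε₁λT, -ε₁(δT + ν), -ε₁(ε*δT + ν)], i.e., U/V = ε₁λT + 1/(-ε₁(δT + ν) + 1/(-ε₁(ε*δT + ν))) as rational functions over F_3. -/

import Mathlib

open RatFunc

lemma aux0 (a : ZMod 3) (ha : a ≠ 0) : RatFunc.C a ≠ 0 := by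
  have hp : (Polynomial.C a : Polynomial (ZMod 3)) ≠ 0 := by simpa using ha
  have := RatFunc.algebraMap_ne_zero hp
  simpa [RatFunc.algebraMap_C] using this

lemma aux1 (a b : ZMod 3) (ha : a ≠ 0) :
    RatFunc.C a * RatFunc.X + RatFunc.C b ≠ 0 := by
  have hp : (Polynomial.C a * Polynomial.X + Polynomial.C b : Polynomial (ZMod 3)) ≠ 0 := by
    intro h
    apply ha
    simpa using congrArg (Polynomial.coeff · 1) h
  have := RatFunc.algebraMap_ne_zero hp
  simpa [map_add, map_mul, RatFunc.algebraMap_C, RatFunc.algebraMap_X] using this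

lemma aux2 : (RatFunc.X ^ 2 + 1 : RatFunc (ZMod 3)) ≠ 0 := by
  have hp : (Polynomial.X ^ 2 + 1 : Polynomial (ZMod 3)) ≠ 0 := by
    intro h
    simpa using congrArg (Polynomial.coeff · 0) h
  have := RatFunc.algebraMap_ne_zero hp
  simpa [map_add, map_pow, RatFunc.algebraMap_X] using this

theorem stmt3 (lam e1 e2 nu : ZMod 3) (hlam : lam ≠ 0) (he1 : e1 ≠ 0)
    (he2 : e2 ≠ 0) (hdelta : lam + e2 ≠ 0) :
    let es : ZMod 3 := if nu = 0 then 1 else -1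
    let T : RatFunc (ZMod 3) := RatFunc.X
    let c : ZMod 3 → RatFunc (ZMod 3) := fun z => RatFunc.C z
    (c lam * T ^ 3 - c e2 * T + c nu) / (c e1 * (T ^ 2 + 1)) =
      c e1 * c lam * T +
        (-(c e1) * (c (lam + e2) * T + c nu) +
          (-(c e1) * (c es * c (lam + e2) * T + c nu))⁻¹)⁻¹ := by
  intro es T c
  have hes_def : es = if nu = 0 then 1 else -1 := rfl
  have hT_def : T = RatFunc.X := rfl
  have hc_def : ∀ z, c z = RatFunc.C z := fun _ => rfl
  -- ZMod 3 scalar facts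
  have hes0 : es ≠ 0 := by rw [hes_def]; split <;> decide
  have hD : e1 * e1 = 1 := by revert he1; revert e1; decide
  have hE : (lam + e2) * (lam + e2) = 1 := by revert hdelta; revert lam e2; decide
  have hA : nu * nu = es - 1 := by
    rw [hes_def]; revert nu; decide
  have hBz : nu * (1 + es) = 0 := by
    rw [hes_def]; revert nu; decide
  have hSN : es * nu = -nu := by
    rw [hes_def]; revert nu; decide
  -- mapped versions
  have cD : c e1 * c e1 = 1 := by rw [hc_def, ← map_mul, hD, map_one]
  have cE : c (lam + e2) * c (lam + e2) = 1 := by rw [hc_def, ← map_mul, hE, map_one]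
  have cA : c nu * c nu = c es - 1 := by
    rw [hc_def, hc_def, ← map_mul, hA, map_sub, map_one]
  have cB : c nu * (1 + c es) = 0 := by
    rw [hc_def, hc_def, ← map_one (RatFunc.C), ← map_add, ← map_mul, hBz, map_zero]
  have cSN : c es * c nu = - c nu := by rw [hc_def, hc_def, ← map_mul, hSN, map_neg]
  have chd : c (lam + e2) = c lam + c e2 := by rw [hc_def, hc_def, hc_def, map_add]
  -- nonzeroness
  have hT2 : T ^ 2 + 1 ≠ 0 := by rw [hT_def]; exact aux2
  have hce1 : c e1 ≠ 0 := aux0 e1 he1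
  have hces : c es ≠ 0 := aux0 es hes0
  set D := c (lam + e2) with hDdef
  set Q : RatFunc (ZMod 3) := -(c e1) * (c es * D * T + c nu) with hQdef
  set P : RatFunc (ZMod 3) := -(c e1) * (D * T + c nu) with hPdef
  have hQ : Q ≠ 0 := by
    have h := aux1 (-(e1 * (es * (lam + e2)))) (-(e1 * nu))
      (by simp [mul_ne_zero, he1, hes0, hdelta])
    have : Q = RatFunc.C (-(e1 * (es * (lam + e2)))) * RatFunc.X + RatFunc.C (-(e1 * nu)) := by
      rw [hQdef, hDdef, hT_def]
      simp only [hc_def, map_neg, map_mul]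
      ring
    rw [this]; exact h
  have hPQ : P * Q + 1 = c es * (T ^ 2 + 1) := by
    rw [hPdef, hQdef]
    linear_combination (c es * D ^ 2 * T ^ 2 + D * c nu * (1 + c es) * T + c nu * c nu) * cD
      + (c es * T ^ 2) * cE + (D * T) * cB + cA
  have hBne : P + Q⁻¹ ≠ 0 := by
    have hBQ : (P + Q⁻¹) * Q = c es * (T ^ 2 + 1) := by
      rw [add_mul, inv_mul_cancel₀ hQ, hPQ]
    intro h
    rw [h, zero_mul] at hBQ
    exact (mul_ne_zero hces hT2) hBQ.symm
  have hBinv : (P + Q⁻¹)⁻¹ = Q / (c es * (T ^ 2 + 1)) := by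
    have h2 : P * Q + 1 = (P + Q⁻¹) * Q := by rw [add_mul, inv_mul_cancel₀ hQ]
    rw [← hPQ, h2, mul_comm, ← div_div, div_self hQ, one_div]
  rw [hBinv]
  rw [hQdef]
  field_simp
  linear_combination ((c lam * T * c es * (T ^ 2 + 1) - c es * D * T - c nu) * (T ^ 2 + 1)) * cD
    + (-(c es) * T * (T ^ 2 + 1)) * chd + (T ^ 2 + 1) * cSN
    + (-(2 : RatFunc (ZMod 3)) * c lam * T * c es - 4 * c lam * T ^ 3 * c es
        - 2 * c lam * T ^ 5 * c es + 2 * T * c es * D + 2 * T ^ 2 * c nu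
        + 2 * T ^ 3 * c es * D + 2 * c nu) * cD
    + (2 * c es * (T + T ^ 3)) * chd
      + (-(T ^ 2 * c nu) + T ^ 3 * c lam * c es - T ^ 3 * c es * D + T ^ 5 * c lam * c es) * cD
      + (-(T ^ 3 * c es)) * chd + (-(T ^ 2)) * cSN
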